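/- The set of totient values has density zero: V(x)/x → 0 as x → ∞, i.e., for every ε > 0 there exists X such that for all real x ≥ X, the number of totient values ≤ x is at most ε·x. -/

import Mathlib

open Finset

lemma two_pow_dvd_totient {n : ℕ} (hn : n ≠ 0) :
    2 ^ (n.primeFactors.erase 2).card ∣ n.totient := by
  have h1 : (∏ _p ∈ n.primeFactors.erase 2, 2) ∣ ∏ p ∈ n.primeFactors.erase 2, (p - 1) := by
    refine prod_dvd_prod_of_dvd _ _ fun p hp => ?_
    have hp2 : p ≠ 2 := (Finset.mem_erase.mp hp).1
    have hpp : p.Prime := Nat.prime_of_mem_primeFactors (Finset.mem_erase.mp hp).2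
    have : Odd p := hpp.odd_of_ne_two hp2
    obtain ⟨c, hc⟩ := this
    omega
  have h2 : (∏ p ∈ n.primeFactors.erase 2, (p - 1)) ∣ ∏ p ∈ n.primeFactors, (p - 1) :=
    prod_dvd_prod_of_subset _ _ _ (Finset.erase_subset _ _)
  have h3 : (∏ p ∈ n.primeFactors, (p - 1)) ∣ n.totient := by
    rw [Nat.totient_eq_prod_factorization hn, Finsupp.prod, Nat.support_factorization]
    exact prod_dvd_prod_of_dvd _ _ fun p hp => ⟨p ^ (n.factorization p - 1), mul_comm _ _⟩
  calc 2 ^ (n.primeFactors.erase 2).card = ∏ _p ∈ n.primeFactors.erase 2, 2 := by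
        rw [Finset.prod_const]
    _ ∣ n.totient := h1.trans (h2.trans h3)

lemma le_pow_mul_totient {n : ℕ} (hn : n ≠ 0) :
    n ≤ 2 ^ n.primeFactors.card * n.totient := by
  conv_lhs => rw [← Nat.factorization_prod_pow_eq_self hn]
  rw [Nat.totient_eq_prod_factorization hn, Finsupp.prod, Finsupp.prod,
    Nat.support_factorization, ← Finset.prod_const (b := 2), ← Finset.prod_mul_distrib]
  refine Finset.prod_le_prod' fun p hp => ?_
  have hpp : p.Prime := Nat.prime_of_mem_primeFactors hp
  have he : 1 ≤ n.factorization p := by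
    rw [← Nat.support_factorization] at hp
    exact Nat.one_le_iff_ne_zero.mpr (Finsupp.mem_support_iff.mp hp)
  calc p ^ n.factorization p = p * p ^ (n.factorization p - 1) := by
        rw [← pow_succ']; congr 1; omega
    _ ≤ (2 * (p - 1)) * p ^ (n.factorization p - 1) := by
        have := hpp.two_le; exact Nat.mul_le_mul_right _ (by omega)
    _ = 2 * (p ^ (n.factorization p - 1) * (p - 1)) := by ring

lemma turan_count (P : Finset ℕ) (hP : ∀ p ∈ P, p.Prime) (N k : ℕ)
    (hk : (k : ℝ) < ∑ p ∈ P, (1:ℝ)/p) :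
    ((((Finset.Ioc 0 N).filter (fun n => (P.filter (· ∣ n)).card ≤ k)).card : ℝ))
      ≤ ((N:ℝ) * (∑ p ∈ P, (1:ℝ)/p) + 2 * (∑ p ∈ P, (1:ℝ)/p) * P.card)
        / ((∑ p ∈ P, (1:ℝ)/p) - k)^2 := by
  set S : ℝ := ∑ p ∈ P, (1:ℝ)/p with hSdef
  have hS0 : 0 ≤ S := le_trans (Nat.cast_nonneg k) hk.le
  set I := Finset.Ioc 0 N with hI
  set f : ℕ → ℝ := fun n => ((P.filter (· ∣ n)).card : ℝ) with hf
  have hfn : ∀ n, f n = ∑ p ∈ P, (if p ∣ n then (1:ℝ) else 0) := by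
    intro n; rw [hf]; rw [Finset.sum_boole]
  have hNS : ∑ p ∈ P, (N:ℝ)/p = N * S := by
    rw [hSdef, Finset.mul_sum]
    exact Finset.sum_congr rfl fun p _ => (mul_one_div _ _).symm
  -- first moment
  have hA : ∑ n ∈ I, f n = ∑ p ∈ P, ((N / p : ℕ) : ℝ) := by
    simp_rw [hfn]
    rw [Finset.sum_comm]
    refine Finset.sum_congr rfl fun p _ => ?_
    rw [Finset.sum_boole, hI, Nat.Ioc_filter_dvd_card_eq_div]
  have hAlow : (N:ℝ) * S - P.card ≤ ∑ n ∈ I, f n := by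
    have hcard : (P.card : ℝ) = ∑ _p ∈ P, (1:ℝ) := by simp
    rw [hA, hSdef, Finset.mul_sum, hcard, ← Finset.sum_sub_distrib]
    refine Finset.sum_le_sum fun p hp => ?_
    have hp2 : (0:ℝ) < p := by exact_mod_cast (hP p hp).pos
    have hnat : N < (N / p + 1) * p :=
      (Nat.div_lt_iff_lt_mul (hP p hp).pos).mp (Nat.lt_succ_self _)
    have hcast : (N:ℝ) < ((N / p : ℕ) + 1) * p := by exact_mod_cast hnat
    rw [mul_one_div, sub_le_iff_le_add, div_le_iff₀ hp2]
    nlinarith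
  -- second moment
  have hB : ∑ n ∈ I, (f n)^2
      = ∑ p ∈ P, ∑ q ∈ P, ((I.filter (fun n => p ∣ n ∧ q ∣ n)).card : ℝ) := by
    have h1 : ∀ n, (f n)^2 = ∑ p ∈ P, ∑ q ∈ P, (if p ∣ n ∧ q ∣ n then (1:ℝ) else 0) := by
      intro n
      rw [hfn, sq, Finset.sum_mul_sum]
      refine Finset.sum_congr rfl fun p _ => Finset.sum_congr rfl fun q _ => ?_
      by_cases h1 : p ∣ n <;> by_cases h2 : q ∣ n <;> simp [h1, h2]
    simp_rw [h1]
    rw [Finset.sum_comm]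
    refine Finset.sum_congr rfl fun p _ => ?_
    rw [Finset.sum_comm]
    refine Finset.sum_congr rfl fun q _ => ?_
    rw [Finset.sum_boole]
  have hBb : ∑ n ∈ I, (f n)^2 ≤ (N:ℝ) * S^2 + N * S := by
    rw [hB]
    have key : ∀ p ∈ P, ∀ q ∈ P,
        ((I.filter (fun n => p ∣ n ∧ q ∣ n)).card : ℝ)
          ≤ (N:ℝ)/p * (1/q) + (if p = q then (N:ℝ)/p else 0) := by
      intro p hp q hq
      by_cases hpq : p = q
      · subst hpq
        have heq : (I.filter (fun n => p ∣ n ∧ p ∣ n)).card = N / p := by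
          rw [Finset.filter_congr (fun n _ => by tauto :
            ∀ n ∈ I, (p ∣ n ∧ p ∣ n) ↔ p ∣ n), hI, Nat.Ioc_filter_dvd_card_eq_div]
        rw [heq, if_pos rfl]
        have h1 : ((N / p : ℕ) : ℝ) ≤ (N:ℝ)/p := Nat.cast_div_le
        have h2 : (0:ℝ) ≤ (N:ℝ)/p * (1/p) := by positivity
        linarith
      · have hco : Nat.Coprime p q := (Nat.coprime_primes (hP p hp) (hP q hq)).mpr hpq
        have hsub : I.filter (fun n => p ∣ n ∧ q ∣ n) ⊆ I.filter (fun n => p * q ∣ n) := by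
          intro n hn
          simp only [Finset.mem_filter] at hn ⊢
          exact ⟨hn.1, hco.mul_dvd_of_dvd_of_dvd hn.2.1 hn.2.2⟩
        have h1 : ((I.filter (fun n => p ∣ n ∧ q ∣ n)).card : ℝ)
            ≤ ((N / (p * q) : ℕ) : ℝ) := by
          have := Finset.card_le_card hsub
          rw [hI, Nat.Ioc_filter_dvd_card_eq_div] at this
          exact_mod_cast this
        refine h1.trans ?_
        rw [if_neg hpq, add_zero, div_mul_eq_mul_div, mul_one_div, div_div]
        calc ((N / (p * q) : ℕ) : ℝ) ≤ (N:ℝ) / ((p * q : ℕ) : ℝ) := Nat.cast_div_le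
          _ = (N:ℝ) / ((q:ℝ) * p) := by push_cast; ring
    calc ∑ p ∈ P, ∑ q ∈ P, ((I.filter (fun n => p ∣ n ∧ q ∣ n)).card : ℝ)
        ≤ ∑ p ∈ P, ∑ q ∈ P, ((N:ℝ)/p * (1/q) + (if p = q then (N:ℝ)/p else 0)) :=
          Finset.sum_le_sum fun p hp => Finset.sum_le_sum fun q hq => key p hp q hq
      _ = (N:ℝ) * S^2 + N * S := by
          simp_rw [Finset.sum_add_distrib, Finset.sum_ite_eq]
          rw [← Finset.sum_mul_sum]
          rw [show ∑ p ∈ P, (if p ∈ P then (N:ℝ)/p else 0) = ∑ p ∈ P, (N:ℝ)/p from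
            Finset.sum_congr rfl fun p hp => if_pos hp, hNS, ← hSdef]
          ring
  -- Chebyshev step
  have hIcard : (I.card : ℝ) = N := by rw [hI]; rw [Nat.card_Ioc]; simp
  have hexp : ∑ n ∈ I, (S - f n)^2
      = (I.card : ℝ) * S^2 - 2*S*(∑ n ∈ I, f n) + ∑ n ∈ I, (f n)^2 := by
    simp_rw [sub_sq]
    rw [Finset.sum_add_distrib, Finset.sum_sub_distrib, Finset.sum_const, nsmul_eq_mul,
      ← Finset.mul_sum]
  have hT : ∑ n ∈ I, (S - f n)^2 ≤ (N:ℝ) * S + 2 * S * P.card := by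
    rw [hexp, hIcard]
    nlinarith [hAlow, hBb, hS0]
  have hcount : (((I.filter (fun n => (P.filter (· ∣ n)).card ≤ k)).card : ℝ)) * (S - k)^2
      ≤ ∑ n ∈ I, (S - f n)^2 := by
    have h1 : (((I.filter (fun n => (P.filter (· ∣ n)).card ≤ k)).card : ℝ)) * (S - k)^2
        = ∑ _n ∈ I.filter (fun n => (P.filter (· ∣ n)).card ≤ k), (S - k)^2 := by
      rw [Finset.sum_const, nsmul_eq_mul]
    rw [h1]
    refine (Finset.sum_le_sum fun n hn => ?_).trans
      (Finset.sum_le_sum_of_subset_of_nonneg (Finset.filter_subset _ _)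
        fun n _ _ => sq_nonneg _)
    have hfk : f n ≤ (k:ℝ) := by
      show ((P.filter (· ∣ n)).card : ℝ) ≤ (k:ℝ)
      exact_mod_cast (Finset.mem_filter.mp hn).2
    have h2 : S - (k:ℝ) ≤ S - f n := by linarith
    have h3 : (0:ℝ) ≤ S - k := by linarith [hk.le]
    exact pow_le_pow_left₀ h3 h2 2
  have hpos : (0:ℝ) < (S - k)^2 := pow_pos (by linarith) 2
  rw [le_div_iff₀ hpos]
  exact hcount.trans hT

lemma exists_prime_sum_ge (B : ℝ) :
    ∃ P : Finset ℕ, (∀ p ∈ P, p.Prime) ∧ B ≤ ∑ p ∈ P, (1:ℝ)/p := by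
  have h := not_summable_one_div_on_primes
  have hnn : ∀ n, 0 ≤ ({p | Nat.Prime p}.indicator fun n => 1 / (n:ℝ)) n := by
    intro n
    exact Set.indicator_nonneg (fun i _ => by positivity) n
  have htend := (not_summable_iff_tendsto_nat_atTop_of_nonneg hnn).mp h
  obtain ⟨y, hy⟩ := (htend.eventually_ge_atTop B).exists
  refine ⟨(Finset.range y).filter Nat.Prime, fun p hp => (Finset.mem_filter.mp hp).2, ?_⟩
  refine hy.trans (le_of_eq ?_)
  rw [Finset.sum_filter]
  refine Finset.sum_congr rfl fun i _ => ?_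
  by_cases hi : Nat.Prime i <;> simp [Set.indicator, hi]

lemma density_arith {ε x S kr c Nr Cr : ℝ} (hε : 0 < ε) (hx1 : 1 ≤ x)
    (hkc : 0 ≤ kr) (hc0 : 0 < c)
    (hS2k : 2*kr + 2 ≤ S) (hS32 : 32 * c / ε ≤ S)
    (hxC : 32 * Cr / (S * ε) ≤ x) (hC0 : 0 ≤ Cr)
    (hN0 : 0 ≤ Nr) (hNx : Nr ≤ c * x) :
    (Nr * S + 2 * S * Cr) / (S - kr)^2 ≤ ε * x / 2 := by
  have hx0 : 0 < x := lt_of_lt_of_le one_pos hx1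
  have hS0 : 0 < S := by linarith
  have hsk2 : S^2/4 ≤ (S - kr)^2 := by nlinarith
  have hsk0 : (0:ℝ) < S^2/4 := by positivity
  have h2 : (Nr * S + 2 * S * Cr) / (S - kr)^2 ≤ (Nr * S + 2 * S * Cr) / (S^2/4) := by
    apply div_le_div_of_nonneg_left _ hsk0 hsk2
    positivity
  have h3 : (Nr * S + 2 * S * Cr) / (S^2/4) = 4*Nr/S + 8*Cr/S := by
    field_simp
    ring
  have h5 : 32 * c ≤ ε * S := by
    rw [div_le_iff₀ hε] at hS32
    linarith
  have h4 : 4*Nr/S ≤ ε * x / 4 := by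
    rw [div_le_iff₀ hS0]
    have h8 : 32 * c * x ≤ ε * S * x := mul_le_mul_of_nonneg_right h5 hx0.le
    nlinarith
  have h6 : 8*Cr/S ≤ ε * x / 4 := by
    have h7 : 32 * Cr ≤ x * (S * ε) := by
      rw [div_le_iff₀ (by positivity : (0:ℝ) < S * ε)] at hxC
      exact hxC
    rw [div_le_iff₀ hS0]
    nlinarith
  calc (Nr * S + 2 * S * Cr) / (S - kr)^2 ≤ (Nr * S + 2 * S * Cr) / (S^2/4) := h2
    _ = 4*Nr/S + 8*Cr/S := h3
    _ ≤ ε * x / 4 + ε * x / 4 := add_le_add h4 h6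
    _ ≤ ε * x / 2 := by linarith


/-- The set of totient values has density zero: `V(x)/x → 0` as `x → ∞`, i.e., for every
`ε > 0` there exists `X` such that for all real `x ≥ X`, the number of totient values `≤ x` is
at most `ε·x`. -/
theorem totient_values_density_zero :
    ∀ ε : ℝ, 0 < ε → ∃ X : ℝ, ∀ x : ℝ, X ≤ x →
      ({m : ℕ | (∃ n : ℕ, 1 ≤ n ∧ Nat.totient n = m) ∧ (m : ℝ) ≤ x}.ncard : ℝ) ≤ ε * x := by
  intro ε hε
  set k : ℕ := ⌈(4:ℝ)/ε⌉₊ + 1 with hkdef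
  have hk2 : (4:ℝ)/ε ≤ 2^k := by
    calc (4:ℝ)/ε ≤ (⌈(4:ℝ)/ε⌉₊ : ℝ) := Nat.le_ceil _
      _ ≤ 2^k := by
          have h1 : ⌈(4:ℝ)/ε⌉₊ < 2^(⌈(4:ℝ)/ε⌉₊) := Nat.lt_two_pow_self
          have h2 : (2:ℕ)^(⌈(4:ℝ)/ε⌉₊) ≤ 2^k := Nat.pow_le_pow_right (by norm_num) (by omega)
          have h3 := h1.le.trans h2
          calc ((⌈(4:ℝ)/ε⌉₊ : ℝ)) ≤ ((2^k : ℕ) : ℝ) := by exact_mod_cast h3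
            _ = 2^k := by push_cast; ring
  have h2k0 : (0:ℝ) < 2^k := by positivity
  obtain ⟨P, hPp, hPS⟩ := exists_prime_sum_ge (2*(k:ℝ) + 2 + 32 * 2^k / ε)
  set S : ℝ := ∑ p ∈ P, (1:ℝ)/p with hSdef
  have hS32 : 32 * (2:ℝ)^k / ε ≤ S := by
    have h0 : (0:ℝ) ≤ 2*(k:ℝ) + 2 := by positivity
    linarith
  have hS2k : 2*(k:ℝ) + 2 ≤ S := by
    have h0 : (0:ℝ) ≤ 32 * (2:ℝ)^k / ε := by positivity
    linarith
  have hSk : (k:ℝ) < S := by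
    have h0 : (0:ℝ) ≤ (k:ℝ) := Nat.cast_nonneg k
    linarith
  have hS0 : (0:ℝ) < S := lt_of_le_of_lt (Nat.cast_nonneg k) hSk
  refine ⟨max 1 (32 * P.card / (S * ε)), fun x hx => ?_⟩
  have hx1 : (1:ℝ) ≤ x := le_trans (le_max_left _ _) hx
  have hx0 : (0:ℝ) < x := lt_of_lt_of_le one_pos hx1
  have hxC : 32 * P.card / (S * ε) ≤ x := le_trans (le_max_right _ _) hx
  set M := ⌊x⌋₊ with hMdef
  set N := 2^k * M with hNdef
  set G := (Finset.Ioc 0 M).filter (fun m => 2^k ∣ m) with hGdef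
  set F := (Finset.Ioc 0 N).filter (fun n => (P.filter (· ∣ n)).card ≤ k) with hFdef
  have hMx : (M:ℝ) ≤ x := Nat.floor_le hx0.le
  -- the inclusion
  have hsub : {m : ℕ | (∃ n : ℕ, 1 ≤ n ∧ Nat.totient n = m) ∧ (m : ℝ) ≤ x}
      ⊆ ↑(G ∪ F.image Nat.totient) := by
    rintro m ⟨⟨n, hn1, hnm⟩, hmx⟩
    have hm1 : 1 ≤ m := hnm ▸ (Nat.totient_pos.mpr hn1)
    have hmM : m ≤ M := Nat.le_floor hmx
    have hn0 : n ≠ 0 := by omega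
    refine Finset.mem_coe.mpr (Finset.mem_union.mpr ?_)
    by_cases hdvd : 2^k ∣ m
    · left
      exact Finset.mem_filter.mpr ⟨Finset.mem_Ioc.mpr ⟨hm1, hmM⟩, hdvd⟩
    · right
      have hcard : (n.primeFactors.erase 2).card < k := by
        by_contra hc
        push_neg at hc
        exact hdvd (dvd_trans (pow_dvd_pow 2 hc) (hnm ▸ two_pow_dvd_totient hn0))
      have homega : n.primeFactors.card ≤ k := by
        by_cases h2 : 2 ∈ n.primeFactors
        · have := Finset.card_erase_add_one h2
          omega
        · rw [Finset.erase_eq_of_notMem h2] at hcard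
          omega
      have hnN : n ≤ N := by
        calc n ≤ 2 ^ n.primeFactors.card * n.totient := le_pow_mul_totient hn0
          _ ≤ 2^k * m := by
              rw [hnm]
              exact Nat.mul_le_mul_right _ (Nat.pow_le_pow_right (by norm_num) homega)
          _ ≤ 2^k * M := Nat.mul_le_mul_left _ hmM
      refine Finset.mem_image.mpr ⟨n, Finset.mem_filter.mpr ⟨Finset.mem_Ioc.mpr ⟨hn1, hnN⟩, ?_⟩, hnm⟩
      have hss : P.filter (· ∣ n) ⊆ n.primeFactors := fun p hp =>
        Nat.mem_primeFactors.mpr ⟨hPp p (Finset.mem_filter.mp hp).1,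
          (Finset.mem_filter.mp hp).2, hn0⟩
      exact le_trans (Finset.card_le_card hss) homega
  -- cardinality bound
  have hncard : ({m : ℕ | (∃ n : ℕ, 1 ≤ n ∧ Nat.totient n = m) ∧ (m : ℝ) ≤ x}.ncard : ℝ)
      ≤ (G.card : ℝ) + F.card := by
    have h1 := Set.ncard_le_ncard hsub (Finset.finite_toSet _)
    rw [Set.ncard_coe_finset] at h1
    have h2 : (G ∪ F.image Nat.totient).card ≤ G.card + F.card :=
      le_trans (Finset.card_union_le _ _) (Nat.add_le_add_left Finset.card_image_le _)
    exact_mod_cast le_trans h1 h2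
  -- bound G
  have hG : (G.card : ℝ) ≤ ε * x / 2 := by
    have h1 : G.card = M / 2^k := by rw [hGdef, Nat.Ioc_filter_dvd_card_eq_div]
    have h2 : ((M / 2^k : ℕ) : ℝ) ≤ (M:ℝ) / ((2^k : ℕ) : ℝ) := Nat.cast_div_le
    rw [h1]
    refine h2.trans ?_
    have h3 : (M:ℝ) / ((2^k : ℕ):ℝ) ≤ x / 2^k := by
      push_cast
      gcongr
    refine h3.trans ?_
    rw [div_le_iff₀ h2k0]
    rw [div_le_iff₀ hε] at hk2
    nlinarith
  -- bound F
  have hF : (F.card : ℝ) ≤ ε * x / 2 := by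
    have h1 := turan_count P hPp N k hSk
    rw [← hSdef, ← hFdef] at h1
    refine h1.trans (density_arith hε hx1 (Nat.cast_nonneg k) h2k0 hS2k hS32 hxC
      (Nat.cast_nonneg _) (Nat.cast_nonneg _) ?_)
    rw [hNdef]
    push_cast
    exact mul_le_mul_of_nonneg_left hMx (by positivity)
  linarith [hncard, hG, hF]
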